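/- For n = 3, the equation F(a) = 0 has exactly two solutions z₁, z₂ in (0,∞), with 3/8 < z₁ < 7/16 and 25/16 < z₂ < 13/8; moreover F(a) < 0 for a ∈ (z₁, z₂) and F(a) > 0 for a ∈ (0, z₁) ∪ (z₂, ∞). -/

import Mathlib

open Real

noncomputable def Gf : ℝ → ℝ := fun a =>
  Real.sqrt 3 / 3 * a - (2*a - 1) / (1 + a^2 - a) ^ ((3:ℝ)/2) - 1 / (1 + a)^2

lemma rpow32 {x : ℝ} (hx : 0 < x) : x ^ ((3:ℝ)/2) = x * Real.sqrt x := by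
  rw [Real.sqrt_eq_rpow, show (3:ℝ)/2 = 1 + 1/2 by norm_num, Real.rpow_add hx, Real.rpow_one]

lemma qpos (a : ℝ) : (0:ℝ) < 1 + a^2 - a := by nlinarith [sq_nonneg (a-1/2)]

set_option maxHeartbeats 1000000 in
lemma chunkL (l u sl : ℝ) (hl0 : 0 ≤ l) (hl2 : u ≤ 1/2) (hsl0 : 0 < sl)
    (hsl2 : sl^2 ≤ 1 + u^2 - u)
    (hfin : 1.7321/3*u + (1-2*l)/((1+u^2-u)*sl) - 1/(1+u)^2 < 0)
    (a : ℝ) (h1 : l ≤ a) (h2 : a ≤ u) : Gf a < 0 := by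
  have hq := qpos a
  have hqu := qpos u
  have hs2 : Real.sqrt (1 + a^2 - a)^2 = 1 + a^2 - a := Real.sq_sqrt hq.le
  have hspos : 0 < Real.sqrt (1 + a^2 - a) := Real.sqrt_pos.mpr hq
  set s := Real.sqrt (1 + a^2 - a)
  unfold Gf
  rw [rpow32 hq]
  have ht : Real.sqrt 3 ^ 2 = 3 := Real.sq_sqrt (by norm_num)
  have htpos : (0:ℝ) < Real.sqrt 3 := Real.sqrt_pos.mpr (by norm_num)
  have ht1 : Real.sqrt 3 < 1.7321 := by nlinarith
  have hqmono : 1 + u^2 - u ≤ 1 + a^2 - a := by nlinarith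
  have hsls : sl ≤ s := by nlinarith
  have hden : (1+u^2-u)*sl ≤ (1+a^2-a)*s := mul_le_mul hqmono hsls hsl0.le hq.le
  have hdpos : (0:ℝ) < (1+u^2-u)*sl := by positivity
  have hmid : (1-2*a)/((1+a^2-a)*s) ≤ (1-2*l)/((1+u^2-u)*sl) :=
    div_le_div₀ (by linarith) (by linarith) hdpos hden
  have hterm1 : Real.sqrt 3 / 3 * a ≤ 1.7321/3*u := by nlinarith
  have hterm3 : 1/(1+u)^2 ≤ 1/(1+a)^2 :=
    div_le_div_of_nonneg_left (by norm_num) (by nlinarith) (by nlinarith)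
  have hmid' : -((2*a-1)/((1+a^2-a)*s)) ≤ (1-2*l)/((1+u^2-u)*sl) := by
    rw [show -((2*a-1)/((1+a^2-a)*s)) = (1-2*a)/((1+a^2-a)*s) by ring]
    exact hmid
  linarith [hmid', hterm1, hterm3, hfin]

set_option maxHeartbeats 1000000 in
lemma chunkR (l u sh : ℝ) (hl2 : 1/2 ≤ l) (hsh0 : 0 < sh)
    (hsh2 : 1 + u^2 - u ≤ sh^2)
    (hfin : 1.7321/3*u - (2*l-1)/((1+u^2-u)*sh) - 1/(1+u)^2 < 0)
    (a : ℝ) (h1 : l ≤ a) (h2 : a ≤ u) : Gf a < 0 := by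
  have hq := qpos a
  have hqu := qpos u
  have hs2 : Real.sqrt (1 + a^2 - a)^2 = 1 + a^2 - a := Real.sq_sqrt hq.le
  have hspos : 0 < Real.sqrt (1 + a^2 - a) := Real.sqrt_pos.mpr hq
  set s := Real.sqrt (1 + a^2 - a)
  unfold Gf
  rw [rpow32 hq]
  have ht : Real.sqrt 3 ^ 2 = 3 := Real.sq_sqrt (by norm_num)
  have htpos : (0:ℝ) < Real.sqrt 3 := Real.sqrt_pos.mpr (by norm_num)
  have ht1 : Real.sqrt 3 < 1.7321 := by nlinarith
  have hqmono : 1 + a^2 - a ≤ 1 + u^2 - u := by nlinarith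
  have hsls : s ≤ sh := by nlinarith
  have hden : (1+a^2-a)*s ≤ (1+u^2-u)*sh := mul_le_mul hqmono hsls hspos.le hqu.le
  have hdpos : (0:ℝ) < (1+a^2-a)*s := by positivity
  have hmid : (2*l-1)/((1+u^2-u)*sh) ≤ (2*a-1)/((1+a^2-a)*s) :=
    div_le_div₀ (by linarith) (by linarith) hdpos hden
  have hterm1 : Real.sqrt 3 / 3 * a ≤ 1.7321/3*u := by nlinarith
  have hterm3 : 1/(1+u)^2 ≤ 1/(1+a)^2 :=
    div_le_div_of_nonneg_left (by norm_num) (by nlinarith) (by nlinarith)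
  linarith [hmid, hterm1, hterm3, hfin]

set_option maxHeartbeats 1000000 in
lemma chunkP (l u sh : ℝ) (hl0 : 0 < l) (hl2 : u ≤ 1/2) (hsh0 : 0 < sh)
    (hsh2 : 1 + l^2 - l ≤ sh^2)
    (hfin : 0 < 1.732/3*l + (1-2*u)/((1+l^2-l)*sh) - 1/(1+l)^2)
    (a : ℝ) (h1 : l ≤ a) (h2 : a ≤ u) : 0 < Gf a := by
  have hq := qpos a
  have hql := qpos l
  have hs2 : Real.sqrt (1 + a^2 - a)^2 = 1 + a^2 - a := Real.sq_sqrt hq.le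
  have hspos : 0 < Real.sqrt (1 + a^2 - a) := Real.sqrt_pos.mpr hq
  set s := Real.sqrt (1 + a^2 - a)
  unfold Gf
  rw [rpow32 hq]
  have ht : Real.sqrt 3 ^ 2 = 3 := Real.sq_sqrt (by norm_num)
  have htpos : (0:ℝ) < Real.sqrt 3 := Real.sqrt_pos.mpr (by norm_num)
  have ht1 : (1.732:ℝ) < Real.sqrt 3 := by nlinarith
  have hqmono : 1 + a^2 - a ≤ 1 + l^2 - l := by nlinarith
  have hsls : s ≤ sh := by nlinarith
  have hden : (1+a^2-a)*s ≤ (1+l^2-l)*sh := mul_le_mul hqmono hsls hspos.le hql.le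
  have hdpos : (0:ℝ) < (1+a^2-a)*s := by positivity
  have hmid : (1-2*u)/((1+l^2-l)*sh) ≤ (1-2*a)/((1+a^2-a)*s) :=
    div_le_div₀ (by linarith) (by linarith) hdpos hden
  have hterm1 : (1.732:ℝ)/3*l ≤ Real.sqrt 3 / 3 * a := by nlinarith
  have hterm3 : 1/(1+a)^2 ≤ 1/(1+l)^2 :=
    div_le_div_of_nonneg_left (by norm_num) (by nlinarith) (by nlinarith)
  have hmid' : (1-2*u)/((1+l^2-l)*sh) ≤ -((2*a-1)/((1+a^2-a)*s)) := by
    rw [show -((2*a-1)/((1+a^2-a)*s)) = (1-2*a)/((1+a^2-a)*s) by ring]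
    exact hmid
  linarith [hmid', hterm1, hterm3, hfin]

set_option maxHeartbeats 1000000 in
lemma chunkQ (l u sl : ℝ) (hl2 : 1/2 ≤ l) (hsl0 : 0 < sl)
    (hsl2 : sl^2 ≤ 1 + l^2 - l)
    (hfin : 0 < 1.732/3*l - (2*u-1)/((1+l^2-l)*sl) - 1/(1+l)^2)
    (a : ℝ) (h1 : l ≤ a) (h2 : a ≤ u) : 0 < Gf a := by
  have hq := qpos a
  have hql := qpos l
  have hs2 : Real.sqrt (1 + a^2 - a)^2 = 1 + a^2 - a := Real.sq_sqrt hq.le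
  have hspos : 0 < Real.sqrt (1 + a^2 - a) := Real.sqrt_pos.mpr hq
  set s := Real.sqrt (1 + a^2 - a)
  unfold Gf
  rw [rpow32 hq]
  have ht : Real.sqrt 3 ^ 2 = 3 := Real.sq_sqrt (by norm_num)
  have htpos : (0:ℝ) < Real.sqrt 3 := Real.sqrt_pos.mpr (by norm_num)
  have ht1 : (1.732:ℝ) < Real.sqrt 3 := by nlinarith
  have hqmono : 1 + l^2 - l ≤ 1 + a^2 - a := by nlinarith
  have hsls : sl ≤ s := by nlinarith
  have hden : (1+l^2-l)*sl ≤ (1+a^2-a)*s := mul_le_mul hqmono hsls hsl0.le hq.le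
  have hdpos : (0:ℝ) < (1+l^2-l)*sl := by positivity
  have hmid : (2*a-1)/((1+a^2-a)*s) ≤ (2*u-1)/((1+l^2-l)*sl) :=
    div_le_div₀ (by linarith) (by linarith) hdpos hden
  have hterm1 : (1.732:ℝ)/3*l ≤ Real.sqrt 3 / 3 * a := by nlinarith
  have hterm3 : 1/(1+a)^2 ≤ 1/(1+l)^2 :=
    div_le_div_of_nonneg_left (by norm_num) (by nlinarith) (by nlinarith)
  linarith [hmid, hterm1, hterm3, hfin]

set_option maxHeartbeats 1000000 in
lemma pos_small (a : ℝ) (h0 : 0 < a) (h1 : a ≤ 11/50) : 0 < Gf a := by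
  have hq := qpos a
  have hs2 : Real.sqrt (1 + a^2 - a)^2 = 1 + a^2 - a := Real.sq_sqrt hq.le
  have hspos : 0 < Real.sqrt (1 + a^2 - a) := Real.sqrt_pos.mpr hq
  set s := Real.sqrt (1 + a^2 - a)
  unfold Gf
  rw [rpow32 hq]
  have hs1 : s ≤ 1 := by nlinarith
  have hkey : 1/(1+a)^2 ≤ (1-2*a)/((1+a^2-a)*s) := by
    rw [div_le_div_iff₀ (by positivity) (by positivity)]
    have hqs : (1+a^2-a)*s ≤ (1+a^2-a) := by nlinarith
    nlinarith [mul_nonneg h0.le (show (0:ℝ) ≤ 1-4*a-2*a^2 by nlinarith)]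
  have htpos : (0:ℝ) < Real.sqrt 3 / 3 * a := by positivity
  have hmid' : 1/(1+a)^2 ≤ -((2*a-1)/((1+a^2-a)*s)) := by
    rw [show -((2*a-1)/((1+a^2-a)*s)) = (1-2*a)/((1+a^2-a)*s) by ring]
    exact hkey
  linarith

lemma pos_mid (a : ℝ) (h1 : 11/50 ≤ a) (h2 : a ≤ 3/8) : 0 < Gf a := by
  rcases le_total a (1883/6400) with h|h
  · exact chunkP (11/50) (1883/6400) (91017/100000) (by norm_num) (by norm_num) (by norm_num)
      (by norm_num) (by norm_num) a h1 h
  rcases le_total a (2233/6400) with h'|h'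
  · exact chunkP (1883/6400) (2233/6400) (44507/50000) (by norm_num) (by norm_num) (by norm_num)
      (by norm_num) (by norm_num) a h h'
  · exact chunkP (2233/6400) (3/8) (87911/100000) (by norm_num) (by norm_num) (by norm_num)
      (by norm_num) (by norm_num) a h' h2

lemma neg_mid (a : ℝ) (h1 : 7/16 ≤ a) (h2 : a ≤ 25/16) : Gf a < 0 := by
  rcases le_total a (961/2048) with h|h
  · exact chunkL (7/16) (961/2048) (86657/100000) (by norm_num) (by norm_num) (by norm_num)
      (by norm_num) (by norm_num) a h1 h
  rcases le_total a (1/2) with hb|hb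
  · exact chunkL (961/2048) (1/2) (43301/50000) (by norm_num) (by norm_num) (by norm_num)
      (by norm_num) (by norm_num) a h hb
  rcases le_total a (1315/2048) with hc|hc
  · exact chunkR (1/2) (1315/2048) (87761/100000) (by norm_num) (by norm_num) (by norm_num)
      (by norm_num) a hb hc
  rcases le_total a (1977/2048) with hd|hd
  · exact chunkR (1315/2048) (1977/2048) (98313/100000) (by norm_num) (by norm_num) (by norm_num)
      (by norm_num) a hc hd
  rcases le_total a (2669/2048) with he|he
  · exact chunkR (1977/2048) (2669/2048) (59059/50000) (by norm_num) (by norm_num) (by norm_num)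
      (by norm_num) a hd he
  rcases le_total a (1529/1024) with hf|hf
  · exact chunkR (2669/2048) (1529/1024) (32943/25000) (by norm_num) (by norm_num) (by norm_num)
      (by norm_num) a he hf
  · exact chunkR (1529/1024) (25/16) (68537/50000) (by norm_num) (by norm_num) (by norm_num)
      (by norm_num) a hf h2

noncomputable def Fd (x : ℝ) : ℝ :=
  Real.sqrt 3 / 3 -
    ((2 * ((1+x^2-x) ^ ((3:ℝ)/2)) - (2*x-1) * ((2*x-1) * ((3:ℝ)/2) * (1+x^2-x) ^ ((3:ℝ)/2-1)))
      / ((1+x^2-x) ^ ((3:ℝ)/2))^2) -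
    ((0 * (1+x)^2 - 1 * (2*(1+x))) / ((1+x)^2)^2)

lemma hasF (x : ℝ) (hx : -1 < x) : HasDerivAt Gf (Fd x) x := by
  have hq := qpos x
  have h1 : HasDerivAt (fun a : ℝ => 1 + a^2 - a) (2*x - 1) x := by
    have := ((hasDerivAt_pow 2 x).const_add 1).sub (hasDerivAt_id x)
    exact this.congr_deriv (by ring)
  have h2 : HasDerivAt (fun a : ℝ => (1 + a^2 - a) ^ ((3:ℝ)/2))
      ((2*x-1) * ((3:ℝ)/2) * (1+x^2-x) ^ ((3:ℝ)/2-1)) x := h1.rpow_const (Or.inl hq.ne')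
  have h3 : HasDerivAt (fun a : ℝ => 2*a - 1) 2 x := by
    simpa using ((hasDerivAt_id x).const_mul 2).sub_const 1
  have hDne : (1+x^2-x) ^ ((3:ℝ)/2) ≠ 0 := by positivity
  have h4 := h3.div h2 hDne
  have h5 : HasDerivAt (fun a : ℝ => (1+a)^2) (2*(1+x)) x := by
    have := ((hasDerivAt_id x).const_add 1).pow 2
    exact this.congr_deriv (by simp only [id_eq]; ring)
  have h6 := (hasDerivAt_const x (1:ℝ)).div h5 (pow_ne_zero 2 (by linarith))
  have h7 : HasDerivAt (fun a : ℝ => Real.sqrt 3 / 3 * a) (Real.sqrt 3 / 3) x := by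
    simpa using (hasDerivAt_id x).const_mul (Real.sqrt 3 / 3)
  have := (h7.sub h4).sub h6
  unfold Gf Fd
  convert this using 1
  all_goals rfl

set_option maxHeartbeats 1000000 in
lemma Fd_neg (x : ℝ) (h1 : 3/8 ≤ x) (h2 : x ≤ 7/16) : Fd x < 0 := by
  have hq := qpos x
  have hs2 : Real.sqrt (1 + x^2 - x)^2 = 1 + x^2 - x := Real.sq_sqrt hq.le
  have hspos : 0 < Real.sqrt (1 + x^2 - x) := Real.sqrt_pos.mpr hq
  set s := Real.sqrt (1 + x^2 - x) with hsdef
  unfold Fd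
  rw [rpow32 hq, show (3:ℝ)/2-1 = (1/2:ℝ) by norm_num, ← Real.sqrt_eq_rpow, ← hsdef]
  have e3 : ((1+x^2-x)*s)^2 = (1+x^2-x)^3 := by rw [mul_pow, hs2]; ring
  rw [show (2:ℝ) * ((1+x^2-x)*s) - (2*x-1) * ((2*x-1) * ((3:ℝ)/2) * s)
      = s*(2*(1+x^2-x) - 3/2*(2*x-1)^2) by ring, e3,
    show ((0:ℝ) * (1+x)^2 - 1 * (2*(1+x))) / ((1+x)^2)^2
      = -(2*(1+x) / ((1+x)^2)^2) by ring, sub_neg_eq_add]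
  have ht : Real.sqrt 3 ^ 2 = 3 := Real.sq_sqrt (by norm_num)
  have htpos : (0:ℝ) < Real.sqrt 3 := Real.sqrt_pos.mpr (by norm_num)
  have ht1 : Real.sqrt 3 < 1.7321 := by nlinarith
  have hsl : (0.868:ℝ) ≤ s := by nlinarith
  have hqhi : 1+x^2-x ≤ 49/64 := by nlinarith
  have hq3 : (1+x^2-x)^3 ≤ (49/64)^3 := pow_le_pow_left₀ hq.le hqhi 3
  have hN : (23:ℝ)/16 ≤ 2*(1+x^2-x) - 3/2*(2*x-1)^2 := by nlinarith
  have hA : (2:ℝ) ≤ s*(2*(1+x^2-x) - 3/2*(2*x-1)^2) / (1+x^2-x)^3 := by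
    rw [le_div_iff₀ (by positivity)]
    nlinarith [mul_le_mul hsl hN (by norm_num) hspos.le]
  have hC : 2*(1+x) / ((1+x)^2)^2 ≤ 0.77 := by
    rw [div_le_iff₀ (by positivity)]
    nlinarith [sq_nonneg (1+x), sq_nonneg ((1+x)^2 - 2)]
  linarith

lemma Fd_pos (x : ℝ) (h1 : 25/16 ≤ x) : 0 < Fd x := by
  have hq := qpos x
  have hs2 : Real.sqrt (1 + x^2 - x)^2 = 1 + x^2 - x := Real.sq_sqrt hq.le
  have hspos : 0 < Real.sqrt (1 + x^2 - x) := Real.sqrt_pos.mpr hq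
  set s := Real.sqrt (1 + x^2 - x) with hsdef
  unfold Fd
  rw [rpow32 hq, show (3:ℝ)/2-1 = (1/2:ℝ) by norm_num, ← Real.sqrt_eq_rpow, ← hsdef]
  have e3 : ((1+x^2-x)*s)^2 = (1+x^2-x)^3 := by rw [mul_pow, hs2]; ring
  rw [show (2:ℝ) * ((1+x^2-x)*s) - (2*x-1) * ((2*x-1) * ((3:ℝ)/2) * s)
      = s*(2*(1+x^2-x) - 3/2*(2*x-1)^2) by ring, e3,
    show ((0:ℝ) * (1+x)^2 - 1 * (2*(1+x))) / ((1+x)^2)^2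
      = -(2*(1+x) / ((1+x)^2)^2) by ring, sub_neg_eq_add]
  have htpos : (0:ℝ) < Real.sqrt 3 := Real.sqrt_pos.mpr (by norm_num)
  have hmid : s*(2*(1+x^2-x) - 3/2*(2*x-1)^2) / (1+x^2-x)^3 ≤ 0 := by
    apply div_nonpos_of_nonpos_of_nonneg _ (by positivity)
    apply mul_nonpos_of_nonneg_of_nonpos hspos.le
    nlinarith
  have hC : (0:ℝ) ≤ 2*(1+x) / ((1+x)^2)^2 := div_nonneg (by linarith) (by positivity)
  have : (0:ℝ) < Real.sqrt 3 / 3 := by positivity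
  linarith

lemma anti : StrictAntiOn Gf (Set.Icc (3/8:ℝ) (7/16)) := by
  apply strictAntiOn_of_deriv_neg (convex_Icc _ _)
  · intro x hx
    exact (hasF x (by linarith [hx.1])).continuousAt.continuousWithinAt
  · intro x hx
    rw [interior_Icc] at hx
    rw [(hasF x (by linarith [hx.1])).deriv]
    exact Fd_neg x hx.1.le hx.2.le

lemma mono : StrictMonoOn Gf (Set.Ici (25/16:ℝ)) := by
  apply strictMonoOn_of_deriv_pos (convex_Ici _)
  · intro x hx
    exact (hasF x (by linarith [Set.mem_Ici.mp hx])).continuousAt.continuousWithinAt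
  · intro x hx
    rw [interior_Ici] at hx
    rw [(hasF x (by linarith [Set.mem_Ioi.mp hx])).deriv]
    exact Fd_pos x (le_of_lt hx)

theorem stmt_5 :
    (let F : ℝ → ℝ := fun a =>
        Real.sqrt 3 / 3 * a - (2*a - 1) / (1 + a^2 - a) ^ ((3:ℝ)/2) - 1 / (1 + a)^2
     ∃ z₁ z₂ : ℝ, 3/8 < z₁ ∧ z₁ < 7/16 ∧ 25/16 < z₂ ∧ z₂ < 13/8 ∧
       F z₁ = 0 ∧ F z₂ = 0 ∧
       (∀ a : ℝ, 0 < a → F a = 0 → a = z₁ ∨ a = z₂) ∧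
       (∀ a : ℝ, z₁ < a → a < z₂ → F a < 0) ∧
       (∀ a : ℝ, 0 < a → a < z₁ → 0 < F a) ∧
       (∀ a : ℝ, z₂ < a → 0 < F a)) := by
  intro F
  have hFG : ∀ a : ℝ, F a = Gf a := fun a => rfl
  -- endpoint values
  have h38 : 0 < Gf (3/8) :=
    chunkP (3/8) (3/8) (7/8) (by norm_num) (by norm_num) (by norm_num) (by norm_num)
      (by norm_num) _ le_rfl le_rfl
  have h716 : Gf (7/16) < 0 := neg_mid _ le_rfl (by norm_num)
  have h2516 : Gf (25/16) < 0 := neg_mid _ (by norm_num) le_rfl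
  have h138 : 0 < Gf (13/8) :=
    chunkQ (13/8) (13/8) (35493/25000) (by norm_num) (by norm_num) (by norm_num)
      (by norm_num) _ le_rfl le_rfl
  -- continuity
  have hcont : ∀ s : Set ℝ, (∀ x ∈ s, (-1:ℝ) < x) → ContinuousOn Gf s := fun s hs x hx =>
    (hasF x (hs x hx)).continuousAt.continuousWithinAt
  -- z₁ via IVT (decreasing)
  have hc1 : ContinuousOn Gf (Set.Icc (3/8:ℝ) (7/16)) :=
    hcont _ (fun x hx => by linarith [hx.1])
  obtain ⟨z₁, hz₁mem, hz₁⟩ := intermediate_value_Ioo' (by norm_num : (3/8:ℝ) ≤ 7/16) hc1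
    (Set.mem_Ioo.mpr ⟨h716, h38⟩)
  obtain ⟨hz₁l, hz₁r⟩ := hz₁mem
  -- z₂ via IVT (increasing)
  have hc2 : ContinuousOn Gf (Set.Icc (25/16:ℝ) (13/8)) :=
    hcont _ (fun x hx => by linarith [hx.1])
  obtain ⟨z₂, hz₂mem, hz₂⟩ := intermediate_value_Ioo (by norm_num : (25/16:ℝ) ≤ 13/8) hc2
    (Set.mem_Ioo.mpr ⟨h2516, h138⟩)
  obtain ⟨hz₂l, hz₂r⟩ := hz₂mem
  have hz₁Icc : z₁ ∈ Set.Icc (3/8:ℝ) (7/16) := ⟨hz₁l.le, hz₁r.le⟩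
  have hz₂Ici : z₂ ∈ Set.Ici (25/16:ℝ) := hz₂l.le
  -- sign lemmas
  have hposL : ∀ a : ℝ, 0 < a → a < z₁ → 0 < Gf a := by
    intro a ha0 haz
    rcases le_total a (11/50) with h|h
    · exact pos_small a ha0 h
    rcases le_total a (3/8) with h'|h'
    · exact pos_mid a h h'
    · have haI : a ∈ Set.Icc (3/8:ℝ) (7/16) := ⟨h', by linarith⟩
      have := anti haI hz₁Icc haz
      rw [hz₁] at this
      exact this
  have hneg : ∀ a : ℝ, z₁ < a → a < z₂ → Gf a < 0 := by
    intro a haz hza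
    rcases le_total a (7/16) with h|h
    · have haI : a ∈ Set.Icc (3/8:ℝ) (7/16) := ⟨by linarith, h⟩
      have := anti hz₁Icc haI haz
      rw [hz₁] at this
      exact this
    rcases le_total a (25/16) with h'|h'
    · exact neg_mid a h h'
    · have haI : a ∈ Set.Ici (25/16:ℝ) := h'
      have := mono haI hz₂Ici hza
      rw [hz₂] at this
      exact this
  have hposR : ∀ a : ℝ, z₂ < a → 0 < Gf a := by
    intro a hza
    have haI : a ∈ Set.Ici (25/16:ℝ) := Set.mem_Ici.mpr (by linarith)
    have := mono hz₂Ici haI hza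
    rw [hz₂] at this
    exact this
  refine ⟨z₁, z₂, hz₁l, hz₁r, hz₂l, hz₂r, hz₁, hz₂, ?_, ?_, ?_, ?_⟩
  · intro a ha0 haF
    rw [hFG] at haF
    rcases lt_trichotomy a z₁ with h|h|h
    · exact absurd haF (ne_of_gt (hposL a ha0 h))
    · exact Or.inl h
    rcases lt_trichotomy a z₂ with h'|h'|h'
    · exact absurd haF (ne_of_lt (hneg a h h'))
    · exact Or.inr h'
    · exact absurd haF (ne_of_gt (hposR a h'))
  · intro a h h'; rw [hFG]; exact hneg a h h'
  · intro a h h'; rw [hFG]; exact hposL a h h'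
  · intro a h; rw [hFG]; exact hposR a h
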